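/- Suppose that for every state i in {1,...,n} there exist d in {1,...,n} and an input j such that i is in the union of N_d^j and P_d^j and exactly one of the sets N_d^j, P_d^j is empty. Then the system is completely sign herdable: for every pair (A',B') with the same sign pattern as (A,B), the range of the controllability matrix of (A',B') contains an entrywise positive vector. -/

import Mathlib

/-- `k` is a walk of length `e + 1` from input `j` to state `i`: it visits the states
`k 0, k 1, …, k e`, ends at `i`, starts along a nonzero entry of `B`, and follows
nonzero entries of `A`. -/
def IsWalk {n m : ℕ} (A : Matrix (Fin n) (Fin n) ℝ) (B : Matrix (Fin n) (Fin m) ℝ)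
    (j : Fin m) (i : Fin n) {e : ℕ} (k : Fin (e + 1) → Fin n) : Prop :=
  k (Fin.last e) = i ∧ B (k 0) j ≠ 0 ∧ ∀ t : Fin e, A (k t.succ) (k t.castSucc) ≠ 0

/-- The weight of the walk `k 0, …, k e` from input `j`:
`B (k 0) j * ∏ₜ A (k (t+1)) (k t)`. -/
def walkWeight {n m : ℕ} (A : Matrix (Fin n) (Fin n) ℝ) (B : Matrix (Fin n) (Fin m) ℝ)
    (j : Fin m) {e : ℕ} (k : Fin (e + 1) → Fin n) : ℝ :=
  B (k 0) j * ∏ t : Fin e, A (k t.succ) (k t.castSucc)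

open Classical in
/-- `rho A B j i d` is the sum of the weights of all walks of length `d` from input `j`
to state `i` (zero if there are none, in particular for `d = 0`). -/
noncomputable def rho {n m : ℕ} (A : Matrix (Fin n) (Fin n) ℝ) (B : Matrix (Fin n) (Fin m) ℝ)
    (j : Fin m) (i : Fin n) : ℕ → ℝ
  | 0 => 0
  | e + 1 => ∑ k : Fin (e + 1) → Fin n,
      if IsWalk A B j i k then walkWeight A B j k else 0

/-- `Pset A B j d` is the set of states reachable from input `j` by at least one walk of
length `d` of positive weight. -/
def Pset {n m : ℕ} (A : Matrix (Fin n) (Fin n) ℝ) (B : Matrix (Fin n) (Fin m) ℝ)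
    (j : Fin m) : ℕ → Set (Fin n)
  | 0 => ∅
  | e + 1 => {i | ∃ k : Fin (e + 1) → Fin n, IsWalk A B j i k ∧ 0 < walkWeight A B j k}

/-- `Nset A B j d` is the set of states reachable from input `j` by at least one walk of
length `d` of negative weight. -/
def Nset {n m : ℕ} (A : Matrix (Fin n) (Fin n) ℝ) (B : Matrix (Fin n) (Fin m) ℝ)
    (j : Fin m) : ℕ → Set (Fin n)
  | 0 => ∅
  | e + 1 => {i | ∃ k : Fin (e + 1) → Fin n, IsWalk A B j i k ∧ walkWeight A B j k < 0}

/-- The controllability matrix `C = [B, AB, …, A^{n-1} B]`; the column indexed by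
`(d, j)` is the `j`-th column of `A^d B`. -/
def ctrb {n m : ℕ} (A : Matrix (Fin n) (Fin n) ℝ) (B : Matrix (Fin n) (Fin m) ℝ) :
    Matrix (Fin n) (Fin n × Fin m) ℝ := fun i p => (A ^ (p.1 : ℕ) * B) i p.2

/-- A vector is unisigned if all of its nonzero entries have the same sign. -/
def Unisigned {n : ℕ} (k : Fin n → ℝ) : Prop :=
  ∀ a b : Fin n, k a ≠ 0 → k b ≠ 0 → Real.sign (k a) = Real.sign (k b)

/-- State `i` is strictly herdable with respect to the pair `(A, B)`: there is a
unisigned vector `k` in the range of the controllability matrix with `k i ≠ 0`. -/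
def StrictlyHerdable {n m : ℕ} (A : Matrix (Fin n) (Fin n) ℝ)
    (B : Matrix (Fin n) (Fin m) ℝ) (i : Fin n) : Prop :=
  ∃ k : Fin n → ℝ, (∃ y : Fin n × Fin m → ℝ, (ctrb A B).mulVec y = k) ∧
    Unisigned k ∧ k i ≠ 0

/-- `(A', B')` has the same sign pattern as `(A, B)`. -/
def SamePattern {n m : ℕ} (A A' : Matrix (Fin n) (Fin n) ℝ)
    (B B' : Matrix (Fin n) (Fin m) ℝ) : Prop :=
  (∀ p q, Real.sign (A' p q) = Real.sign (A p q)) ∧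
    (∀ p q, Real.sign (B' p q) = Real.sign (B p q))

section Aux

lemma real_sign_mul (x y : ℝ) : Real.sign (x * y) = Real.sign x * Real.sign y := by
  rcases lt_trichotomy x 0 with hx | rfl | hx
  · rcases lt_trichotomy y 0 with hy | rfl | hy
    · rw [Real.sign_of_pos (mul_pos_of_neg_of_neg hx hy), Real.sign_of_neg hx,
        Real.sign_of_neg hy]; norm_num
    · simp [Real.sign_zero]
    · rw [Real.sign_of_neg (mul_neg_of_neg_of_pos hx hy), Real.sign_of_neg hx,
        Real.sign_of_pos hy]; norm_num
  · simp [Real.sign_zero]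
  · rcases lt_trichotomy y 0 with hy | rfl | hy
    · rw [Real.sign_of_neg (mul_neg_of_pos_of_neg hx hy), Real.sign_of_pos hx,
        Real.sign_of_neg hy]; norm_num
    · simp [Real.sign_zero]
    · rw [Real.sign_of_pos (mul_pos hx hy), Real.sign_of_pos hx, Real.sign_of_pos hy]
      norm_num

lemma real_sign_prod {α : Type*} (s : Finset α) (f : α → ℝ) :
    Real.sign (∏ t ∈ s, f t) = ∏ t ∈ s, Real.sign (f t) := by
  classical
  induction s using Finset.induction_on with
  | empty => simp [Real.sign_one]
  | insert _ _ h ih => rw [Finset.prod_insert h, Finset.prod_insert h, real_sign_mul, ih]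

lemma pos_of_sign_eq {x y : ℝ} (h : Real.sign y = Real.sign x) (hx : 0 < x) : 0 < y := by
  rcases lt_trichotomy y 0 with hy | rfl | hy
  · rw [Real.sign_of_neg hy, Real.sign_of_pos hx] at h; norm_num at h
  · rw [Real.sign_zero, Real.sign_of_pos hx] at h; norm_num at h
  · exact hy

lemma neg_of_sign_eq {x y : ℝ} (h : Real.sign y = Real.sign x) (hx : x < 0) : y < 0 := by
  rcases lt_trichotomy y 0 with hy | rfl | hy
  · exact hy
  · rw [Real.sign_zero, Real.sign_of_neg hx] at h; norm_num at h
  · rw [Real.sign_of_pos hy, Real.sign_of_neg hx] at h; norm_num at h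

lemma ne_zero_iff_of_sign_eq {x y : ℝ} (h : Real.sign y = Real.sign x) : y ≠ 0 ↔ x ≠ 0 := by
  have h0 : (y = 0) ↔ (x = 0) := by
    rw [← Real.sign_eq_zero_iff (r := y), h, Real.sign_eq_zero_iff]
  exact not_congr h0

lemma isWalk_iff_of_samePattern {n m : ℕ} {A A' : Matrix (Fin n) (Fin n) ℝ}
    {B B' : Matrix (Fin n) (Fin m) ℝ} (hs : SamePattern A A' B B') (j : Fin m) (i : Fin n)
    {e : ℕ} (k : Fin (e + 1) → Fin n) : IsWalk A' B' j i k ↔ IsWalk A B j i k := by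
  unfold IsWalk
  rw [ne_zero_iff_of_sign_eq (hs.2 _ _)]
  refine and_congr_right fun _ => and_congr_right fun _ => forall_congr' fun t => ?_
  rw [ne_zero_iff_of_sign_eq (hs.1 _ _)]

lemma sign_walkWeight_of_samePattern {n m : ℕ} {A A' : Matrix (Fin n) (Fin n) ℝ}
    {B B' : Matrix (Fin n) (Fin m) ℝ} (hs : SamePattern A A' B B') (j : Fin m)
    {e : ℕ} (k : Fin (e + 1) → Fin n) :
    Real.sign (walkWeight A' B' j k) = Real.sign (walkWeight A B j k) := by
  unfold walkWeight
  rw [real_sign_mul, real_sign_mul, real_sign_prod, real_sign_prod, hs.2]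
  congr 1
  exact Finset.prod_congr rfl fun t _ => hs.1 _ _

lemma walkWeight_ne_zero {n m : ℕ} {A : Matrix (Fin n) (Fin n) ℝ}
    {B : Matrix (Fin n) (Fin m) ℝ} {j : Fin m} {i : Fin n} {e : ℕ}
    {k : Fin (e + 1) → Fin n} (hk : IsWalk A B j i k) : walkWeight A B j k ≠ 0 :=
  mul_ne_zero hk.2.1 (Finset.prod_ne_zero_iff.mpr fun t _ => hk.2.2 t)

lemma isWalk_snoc {n m : ℕ} (A : Matrix (Fin n) (Fin n) ℝ) (B : Matrix (Fin n) (Fin m) ℝ)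
    (j : Fin m) (i : Fin n) {e : ℕ} (k : Fin (e + 1) → Fin n) :
    IsWalk A B j i (Fin.snoc k i : Fin (e + 2) → Fin n) ↔
      A i (k (Fin.last e)) ≠ 0 ∧ IsWalk A B j (k (Fin.last e)) k := by
  unfold IsWalk
  have h0 : (Fin.snoc k i : Fin (e + 2) → Fin n) 0 = k 0 := by
    rw [show (0 : Fin (e + 2)) = Fin.castSucc 0 from rfl, Fin.snoc_castSucc]
  rw [Fin.snoc_last, h0, Fin.forall_fin_succ']
  have hlast : ∀ t : Fin e,
      (Fin.snoc k i : Fin (e + 2) → Fin n) (Fin.castSucc t).succ = k t.succ := fun t => by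
    rw [Fin.succ_castSucc, Fin.snoc_castSucc]
  have hcast : ∀ t : Fin e,
      (Fin.snoc k i : Fin (e + 2) → Fin n) (Fin.castSucc t).castSucc = k t.castSucc := fun t =>
    Fin.snoc_castSucc _ _ _
  constructor
  · rintro ⟨-, hB, hmid, hend⟩
    rw [Fin.succ_last, Fin.snoc_last, Fin.snoc_castSucc] at hend
    exact ⟨hend, rfl, hB, fun t => by rw [← hlast t, ← hcast t]; exact hmid t⟩
  · rintro ⟨hend, -, hB, hmid⟩
    refine ⟨rfl, hB, fun t => by rw [hlast t, hcast t]; exact hmid t, ?_⟩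
    rw [Fin.succ_last, Fin.snoc_last, Fin.snoc_castSucc]
    exact hend

lemma walkWeight_snoc {n m : ℕ} (A : Matrix (Fin n) (Fin n) ℝ) (B : Matrix (Fin n) (Fin m) ℝ)
    (j : Fin m) (i : Fin n) {e : ℕ} (k : Fin (e + 1) → Fin n) :
    walkWeight A B j (Fin.snoc k i : Fin (e + 2) → Fin n) =
      walkWeight A B j k * A i (k (Fin.last e)) := by
  unfold walkWeight
  have h0 : (Fin.snoc k i : Fin (e + 2) → Fin n) 0 = k 0 := by
    rw [show (0 : Fin (e + 2)) = Fin.castSucc 0 from rfl, Fin.snoc_castSucc]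
  rw [h0, Fin.prod_univ_castSucc, mul_assoc]
  congr 2
  · refine Finset.prod_congr rfl fun t _ => ?_
    rw [Fin.succ_castSucc, Fin.snoc_castSucc, Fin.snoc_castSucc]
  · rw [Fin.succ_last, Fin.snoc_last, Fin.snoc_castSucc]

/-- The equivalence `(Fin (e+1) → Fin n) × Fin n ≃ (Fin (e+2) → Fin n)` given by `snoc`. -/
def snocEquiv (n e : ℕ) : ((Fin (e + 1) → Fin n) × Fin n) ≃ (Fin (e + 2) → Fin n) where
  toFun kp := Fin.snoc kp.1 kp.2
  invFun k := (Fin.init k, k (Fin.last (e + 1)))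
  left_inv := fun ⟨k, p⟩ => by simp
  right_inv := fun k => by simp

open Classical in
lemma entry_eq_sum_walks {n m : ℕ} (A : Matrix (Fin n) (Fin n) ℝ)
    (B : Matrix (Fin n) (Fin m) ℝ) (j : Fin m) (e : ℕ) (i : Fin n) :
    (A ^ e * B) i j = ∑ k : Fin (e + 1) → Fin n,
      if IsWalk A B j i k then walkWeight A B j k else 0 := by
  induction e generalizing i with
  | zero =>
    rw [pow_zero, Matrix.one_mul]
    rw [← Equiv.sum_comp (Equiv.funUnique (Fin 1) (Fin n)).symm
      (fun k : Fin 1 → Fin n => if IsWalk A B j i k then walkWeight A B j k else 0)]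
    rw [Finset.sum_eq_single i]
    · by_cases hB : B i j = 0
      · rw [if_neg]
        · exact hB
        · rintro ⟨-, hB', -⟩
          exact hB' hB
      · rw [if_pos ⟨rfl, hB, fun t => t.elim0⟩]
        unfold walkWeight
        simp
    · intro x _ hx
      rw [if_neg]
      rintro ⟨h1, -, -⟩
      exact hx h1
    · intro hi
      exact absurd (Finset.mem_univ i) hi
  | succ e ih =>
    rw [pow_succ', Matrix.mul_assoc, Matrix.mul_apply]
    have lhs_eq : ∑ p : Fin n, A i p * (A ^ e * B) p j =
        ∑ k : Fin (e + 1) → Fin n, A i (k (Fin.last e)) *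
          (if IsWalk A B j (k (Fin.last e)) k then walkWeight A B j k else 0) := by
      simp_rw [ih, Finset.mul_sum]
      rw [Finset.sum_comm]
      refine Finset.sum_congr rfl fun k _ => ?_
      rw [Finset.sum_eq_single (k (Fin.last e))]
      · intro x _ hx
        rw [if_neg, mul_zero]
        rintro ⟨h1, -, -⟩
        exact hx h1.symm
      · intro hk
        exact absurd (Finset.mem_univ _) hk
    rw [lhs_eq]
    rw [← Equiv.sum_comp (snocEquiv n e)
      (fun k : Fin (e + 2) → Fin n => if IsWalk A B j i k then walkWeight A B j k else 0)]
    rw [Fintype.sum_prod_type]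
    refine Finset.sum_congr rfl fun k _ => ?_
    simp only [snocEquiv, Equiv.coe_fn_mk]
    rw [Finset.sum_eq_single i]
    · show A i (k (Fin.last e)) * _ = if IsWalk A B j i (Fin.snoc k i) then _ else 0
      by_cases hA : A i (k (Fin.last e)) = 0
      · rw [hA, zero_mul, if_neg]
        intro hw
        exact ((isWalk_snoc A B j i k).mp hw).1 hA
      · by_cases hW : IsWalk A B j (k (Fin.last e)) k
        · rw [if_pos hW, if_pos ((isWalk_snoc A B j i k).mpr ⟨hA, hW⟩),
            walkWeight_snoc, mul_comm]
        · rw [if_neg hW, mul_zero, if_neg]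
          intro hw
          exact hW ((isWalk_snoc A B j i k).mp hw).2
    · intro p _ hp
      apply if_neg
      intro hw
      apply hp
      have := hw.1
      rwa [Fin.snoc_last] at this
    · intro hi
      exact absurd (Finset.mem_univ i) hi

end Aux

/-- If for every state `i` there are `d ∈ {1,…,n}` and an input `j` such that
`i ∈ N_d^j ∪ P_d^j` and exactly one of `N_d^j`, `P_d^j` is empty, then the system is
completely sign herdable: for every pair with the same sign pattern, the range of its
controllability matrix contains an entrywise positive vector. -/
theorem completelySignHerdable_of_unisigned_walks {n m : ℕ}
    (A : Matrix (Fin n) (Fin n) ℝ) (B : Matrix (Fin n) (Fin m) ℝ)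
    (h : ∀ i : Fin n, ∃ (d : ℕ) (j : Fin m), 1 ≤ d ∧ d ≤ n ∧
      i ∈ Nset A B j d ∪ Pset A B j d ∧
      Xor' (Nset A B j d = ∅) (Pset A B j d = ∅)) :
    ∀ (A' : Matrix (Fin n) (Fin n) ℝ) (B' : Matrix (Fin n) (Fin m) ℝ),
      SamePattern A A' B B' →
      ∃ k : Fin n → ℝ, (∃ y : Fin n × Fin m → ℝ, (ctrb A' B').mulVec y = k) ∧
        ∀ i : Fin n, 0 < k i := by
  intro A' B' hs
  classical
  choose d j hd1 hdn hmem hxor using h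
  set e : Fin n → ℕ := fun i => d i - 1 with he_def
  have hde : ∀ i, d i = e i + 1 := fun i => by
    show d i = d i - 1 + 1
    have := hd1 i; omega
  have helt : ∀ i, e i < n := fun i => by
    show d i - 1 < n
    have h1 := hd1 i; have h2 := hdn i; omega
  -- the sign coefficients
  set ε : Fin n → ℝ := fun i => if Nset A B (j i) (d i) = ∅ then 1 else -1 with hε_def
  -- key sign facts
  have key : ∀ i : Fin n, (∀ i' : Fin n, 0 ≤ ε i * (A' ^ (e i) * B') i' (j i)) ∧
      0 < ε i * (A' ^ (e i) * B') i (j i) := by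
    intro i
    have hxi := hxor i
    have hmi := hmem i
    rw [hde i] at hxi hmi
    have hNdef : Nset A B (j i) (e i + 1) =
        {i' | ∃ k : Fin (e i + 1) → Fin n, IsWalk A B (j i) i' k ∧ walkWeight A B (j i) k < 0} :=
      rfl
    have hPdef : Pset A B (j i) (e i + 1) =
        {i' | ∃ k : Fin (e i + 1) → Fin n, IsWalk A B (j i) i' k ∧ 0 < walkWeight A B (j i) k} :=
      rfl
    rcases hxi with ⟨hN, hP⟩ | ⟨hP, hN⟩
    · -- no negative walks: all weights positive
      have hεi : ε i = 1 := by simp [hε_def, hde i, hN]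
      have hpos : ∀ (i' : Fin n) (k : Fin (e i + 1) → Fin n),
          IsWalk A B (j i) i' k → 0 < walkWeight A B (j i) k := by
        intro i' k hk
        rcases lt_trichotomy (walkWeight A B (j i) k) 0 with hlt | heq | hgt
        · have hmN : i' ∈ Nset A B (j i) (e i + 1) := ⟨k, hk, hlt⟩
          rw [hN] at hmN
          exact absurd hmN (Set.notMem_empty i')
        · exact absurd heq (walkWeight_ne_zero hk)
        · exact hgt
      have hterm : ∀ (i' : Fin n) (k : Fin (e i + 1) → Fin n),
          0 ≤ if IsWalk A' B' (j i) i' k then walkWeight A' B' (j i) k else 0 := by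
        intro i' k
        split_ifs with hk
        · have hk' := (isWalk_iff_of_samePattern hs (j i) i' k).mp hk
          exact (pos_of_sign_eq (sign_walkWeight_of_samePattern hs (j i) k)
            (hpos i' k hk')).le
        · exact le_refl 0
      constructor
      · intro i'
        rw [hεi, one_mul, entry_eq_sum_walks]
        exact Finset.sum_nonneg fun k _ => hterm i' k
      · rw [hεi, one_mul, entry_eq_sum_walks]
        have hiP : i ∈ Pset A B (j i) (e i + 1) := by
          rcases hmi with hmi | hmi
          · rw [hN] at hmi; exact absurd hmi (Set.notMem_empty i)
          · exact hmi
        obtain ⟨k₀, hk₀, hw₀⟩ := hiP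
        refine Finset.sum_pos' (fun k _ => hterm i k) ⟨k₀, Finset.mem_univ k₀, ?_⟩
        rw [if_pos ((isWalk_iff_of_samePattern hs (j i) i k₀).mpr hk₀)]
        exact pos_of_sign_eq (sign_walkWeight_of_samePattern hs (j i) k₀) hw₀
    · -- no positive walks: all weights negative
      have hεi : ε i = -1 := by
        have : Nset A B (j i) (d i) ≠ ∅ := by rw [hde i]; exact hN
        simp [hε_def, this]
      have hneg : ∀ (i' : Fin n) (k : Fin (e i + 1) → Fin n),
          IsWalk A B (j i) i' k → walkWeight A B (j i) k < 0 := by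
        intro i' k hk
        rcases lt_trichotomy (walkWeight A B (j i) k) 0 with hlt | heq | hgt
        · exact hlt
        · exact absurd heq (walkWeight_ne_zero hk)
        · have hmP : i' ∈ Pset A B (j i) (e i + 1) := ⟨k, hk, hgt⟩
          rw [hP] at hmP
          exact absurd hmP (Set.notMem_empty i')
      have hterm : ∀ (i' : Fin n) (k : Fin (e i + 1) → Fin n),
          (if IsWalk A' B' (j i) i' k then walkWeight A' B' (j i) k else 0) ≤ 0 := by
        intro i' k
        split_ifs with hk
        · have hk' := (isWalk_iff_of_samePattern hs (j i) i' k).mp hk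
          exact (neg_of_sign_eq (sign_walkWeight_of_samePattern hs (j i) k)
            (hneg i' k hk')).le
        · exact le_refl 0
      constructor
      · intro i'
        rw [hεi, neg_one_mul, le_neg, neg_zero, entry_eq_sum_walks]
        exact Finset.sum_nonpos fun k _ => hterm i' k
      · rw [hεi, neg_one_mul, lt_neg, neg_zero, entry_eq_sum_walks]
        have hiN : i ∈ Nset A B (j i) (e i + 1) := by
          rcases hmi with hmi | hmi
          · exact hmi
          · rw [hP] at hmi; exact absurd hmi (Set.notMem_empty i)
        obtain ⟨k₀, hk₀, hw₀⟩ := hiN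
        refine Finset.sum_neg' (fun k _ => hterm i k) ⟨k₀, Finset.mem_univ k₀, ?_⟩
        rw [if_pos ((isWalk_iff_of_samePattern hs (j i) i k₀).mpr hk₀)]
        exact neg_of_sign_eq (sign_walkWeight_of_samePattern hs (j i) k₀) hw₀
  -- assemble the positive vector
  set c : Fin n → Fin n × Fin m := fun i => (⟨e i, helt i⟩, j i) with hc_def
  refine ⟨fun i' => ∑ i : Fin n, ε i * (A' ^ (e i) * B') i' (j i),
    ⟨fun p => ∑ i : Fin n, if p = c i then ε i else 0, ?_⟩, ?_⟩
  · funext i'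
    show ∑ p : Fin n × Fin m, ctrb A' B' i' p * ∑ i : Fin n, (if p = c i then ε i else 0) = _
    simp_rw [Finset.mul_sum]
    rw [Finset.sum_comm]
    refine Finset.sum_congr rfl fun i _ => ?_
    simp_rw [mul_ite, mul_zero]
    rw [Finset.sum_ite_eq' Finset.univ (c i) (fun p => ctrb A' B' i' p * ε i),
      if_pos (Finset.mem_univ _)]
    rw [mul_comm]
    rfl
  · intro i'
    refine Finset.sum_pos' (fun i _ => (key i).1 i') ⟨i', Finset.mem_univ i', (key i').2⟩
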